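/- (Weidmann-type limit point criterion.) Let x₀ < b be reals, let p, q : ℝ → ℝ be continuous on [x₀, b) with p > 0 on [x₀, b), and let γ ∈ ℝ with q(t) > γ for all t ∈ [x₀, b). Let u : ℝ → ℝ be differentiable on [x₀, b) with t ↦ p(t)·(deriv u)(t) differentiable on [x₀, b), satisfying deriv(t ↦ p(t)·(deriv u)(t))(x) = (q(x) − γ)·u(x) for all x ∈ [x₀, b), with u(x₀) = 1 and (deriv u)(x₀) = 0. If for some c ∈ (x₀, b) the function x ↦ ∫_c^x dt/p(t) has non-integrable square on (c,b) (it is not in L²(c,b)), then u² is not integrable on (c,b), i.e. u ∉ L²(c,b). -/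

import Mathlib

open MeasureTheory

/-- Weidmann-type limit point criterion: if the solution `u` of `(p·u')' = (q − γ)·u`
on `[x₀,b)` with `u(x₀) = 1`, `u'(x₀) = 0` exists, `q > γ`, `p > 0`, and for some
`c ∈ (x₀,b)` the function `x ↦ ∫_c^x dt/p(t)` is not square-integrable on `(c,b)`,
then `u ∉ L²(c,b)`. -/
theorem weidmann_limit_point_criterion
    (x₀ b : ℝ) (hx₀b : x₀ < b)
    (p q : ℝ → ℝ)
    (hp : ContinuousOn p (Set.Ico x₀ b)) (hq : ContinuousOn q (Set.Ico x₀ b))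
    (hppos : ∀ t ∈ Set.Ico x₀ b, 0 < p t)
    (γ : ℝ) (hqγ : ∀ t ∈ Set.Ico x₀ b, γ < q t)
    (u : ℝ → ℝ)
    (hu : ∀ t ∈ Set.Ico x₀ b, DifferentiableAt ℝ u t)
    (hpu : ∀ t ∈ Set.Ico x₀ b, DifferentiableAt ℝ (fun s => p s * deriv u s) t)
    (heq : ∀ t ∈ Set.Ico x₀ b,
      deriv (fun s => p s * deriv u s) t = (q t - γ) * u t)
    (hu0 : u x₀ = 1) (hu'0 : deriv u x₀ = 0)
    (c : ℝ) (hc : c ∈ Set.Ioo x₀ b)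
    (hnotL2 : ¬ IntegrableOn (fun x => (∫ t in c..x, 1 / p t) ^ 2) (Set.Ioo c b)) :
    ¬ IntegrableOn (fun x => u x ^ 2) (Set.Ioo c b) := by
  intro hint
  apply hnotL2
  set v : ℝ → ℝ := fun s => p s * deriv u s with hvdef
  set G : ℝ → ℝ := fun s => u s * v s with hGdef
  set I : ℝ → ℝ := fun x => ∫ t in c..x, 1 / p t with hIdef
  obtain ⟨hx₀c, hcb⟩ := hc
  have hsub : ∀ x ∈ Set.Ico x₀ b, Set.Icc x₀ x ⊆ Set.Ico x₀ b :=
    fun x hx t ht => ⟨ht.1, lt_of_le_of_lt ht.2 hx.2⟩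
  -- derivative of v
  have hvD : ∀ t ∈ Set.Ico x₀ b, HasDerivAt v ((q t - γ) * u t) t := by
    intro t ht
    have h := (hpu t ht).hasDerivAt
    rwa [heq t ht] at h
  -- derivative of G
  have hGD : ∀ t ∈ Set.Ico x₀ b,
      HasDerivAt G (p t * deriv u t ^ 2 + (q t - γ) * u t ^ 2) t := by
    intro t ht
    have h := ((hu t ht).hasDerivAt).mul (hvD t ht)
    refine h.congr_deriv ?_
    simp only [hvdef]
    ring
  -- G is monotone on Icc x₀ x
  have hGmono : ∀ x ∈ Set.Ico x₀ b, MonotoneOn G (Set.Icc x₀ x) := by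
    intro x hx
    apply monotoneOn_of_deriv_nonneg (convex_Icc _ _)
    · exact fun t ht => ((hGD t (hsub x hx ht)).continuousAt).continuousWithinAt
    · intro t ht
      rw [interior_Icc] at ht
      exact ((hGD t (hsub x hx ⟨ht.1.le, ht.2.le⟩)).differentiableAt).differentiableWithinAt
    · intro t ht
      rw [interior_Icc] at ht
      have ht' := hsub x hx ⟨ht.1.le, ht.2.le⟩
      rw [(hGD t ht').deriv]
      have h1 : 0 ≤ p t * deriv u t ^ 2 := mul_nonneg (hppos t ht').le (sq_nonneg _)
      have h2 : 0 ≤ (q t - γ) * u t ^ 2 :=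
        mul_nonneg (by linarith [hqγ t ht']) (sq_nonneg _)
      linarith
  have hG0 : G x₀ = 0 := by simp [hGdef, hvdef, hu0, hu'0]
  have hGnonneg : ∀ t ∈ Set.Ico x₀ b, 0 ≤ G t := by
    intro t ht
    have := hGmono t ht (Set.left_mem_Icc.2 ht.1) (Set.right_mem_Icc.2 ht.1) ht.1
    rwa [hG0] at this
  -- u * u' ≥ 0
  have huu' : ∀ t ∈ Set.Ico x₀ b, 0 ≤ u t * deriv u t := by
    intro t ht
    have h1 : 0 ≤ G t / p t := div_nonneg (hGnonneg t ht) (hppos t ht).le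
    have hpne : p t ≠ 0 := (hppos t ht).ne'
    have : G t / p t = u t * deriv u t := by
      field_simp [hGdef, hvdef]
      ring
    rwa [this] at h1
  -- u^2 ≥ 1
  have hsq : ∀ t ∈ Set.Ico x₀ b, 1 ≤ u t ^ 2 := by
    intro t ht
    have hmono : MonotoneOn (fun s => u s ^ 2) (Set.Icc x₀ t) := by
      apply monotoneOn_of_deriv_nonneg (convex_Icc _ _)
      · exact fun s hs => ((hu s (hsub t ht hs)).continuousAt.pow 2).continuousWithinAt
      · intro s hs
        rw [interior_Icc] at hs
        exact ((hu s (hsub t ht ⟨hs.1.le, hs.2.le⟩)).pow 2).differentiableWithinAt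
      · intro s hs
        rw [interior_Icc] at hs
        have hs' := hsub t ht ⟨hs.1.le, hs.2.le⟩
        have hD := ((hu s hs').hasDerivAt).pow 2
        rw [show (fun s => u s ^ 2) = u ^ 2 from rfl, hD.deriv]
        norm_num
        nlinarith [huu' s hs']
    have := hmono (Set.left_mem_Icc.2 ht.1) (Set.right_mem_Icc.2 ht.1) ht.1
    simpa [hu0] using this
  -- u ≥ 1
  have hu1 : ∀ t ∈ Set.Ico x₀ b, 1 ≤ u t := by
    intro t ht
    by_contra hlt
    push_neg at hlt
    have hneg : u t ≤ -1 := by nlinarith [hsq t ht]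
    have hcont : ContinuousOn u (Set.Icc x₀ t) :=
      fun s hs => (hu s (hsub t ht hs)).continuousAt.continuousWithinAt
    have h0mem : (0 : ℝ) ∈ Set.Icc (u t) (u x₀) := by
      rw [hu0]; constructor <;> linarith
    obtain ⟨s, hs, hus⟩ := intermediate_value_Icc' ht.1 hcont h0mem
    have := hsq s (hsub t ht hs)
    rw [hus] at this
    norm_num at this
  -- v strictly monotone, v c > 0
  have hvmono : ∀ x ∈ Set.Ico x₀ b, StrictMonoOn v (Set.Icc x₀ x) := by
    intro x hx
    apply strictMonoOn_of_deriv_pos (convex_Icc _ _)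
    · exact fun t ht => ((hvD t (hsub x hx ht)).continuousAt).continuousWithinAt
    · intro t ht
      rw [interior_Icc] at ht
      have ht' := hsub x hx ⟨ht.1.le, ht.2.le⟩
      rw [(hvD t ht').deriv]
      have := hu1 t ht'
      have := hqγ t ht'
      nlinarith
  have hv0 : v x₀ = 0 := by simp [hvdef, hu'0]
  have hcIco : c ∈ Set.Ico x₀ b := ⟨hx₀c.le, hcb⟩
  have hvc : 0 < v c := by
    have := hvmono c hcIco (Set.left_mem_Icc.2 hx₀c.le) (Set.right_mem_Icc.2 hx₀c.le) hx₀c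
    rwa [hv0] at this
  -- continuity of deriv u on subsets of Ico
  have hcderiv : ∀ x ∈ Set.Ico x₀ b, ContinuousOn (deriv u) (Set.Icc c x) := by
    intro x hx
    have hIccsub : Set.Icc c x ⊆ Set.Ico x₀ b := fun s hs =>
      ⟨le_trans hx₀c.le hs.1, lt_of_le_of_lt hs.2 hx.2⟩
    have hvcont : ContinuousOn v (Set.Icc c x) :=
      fun s hs => ((hpu s (hIccsub hs)).continuousAt).continuousWithinAt
    have : ContinuousOn (fun s => v s / p s) (Set.Icc c x) :=
      hvcont.div (hp.mono hIccsub) (fun s hs => (hppos s (hIccsub hs)).ne')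
    apply this.congr
    intro s hs
    have hpne : p s ≠ 0 := (hppos s (hIccsub hs)).ne'
    simp [hvdef]
    field_simp
  -- key inequality: for x ∈ Ioo c b, v c * I x ≤ u x and 0 ≤ I x
  have hIint : ∀ x ∈ Set.Ico x₀ b, IntervalIntegrable (fun t => 1 / p t) volume c x := by
    intro x hx
    apply ContinuousOn.intervalIntegrable
    intro s hs
    have hs' : s ∈ Set.Ico x₀ b := by
      rcases le_total c x with h | h
      · rw [Set.uIcc_of_le h] at hs
        exact ⟨le_trans hx₀c.le hs.1, lt_of_le_of_lt hs.2 hx.2⟩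
      · rw [Set.uIcc_of_ge h] at hs
        exact ⟨le_trans hx.1 hs.1, lt_of_le_of_lt hs.2 hcb⟩
    exact (continuousOn_const.div hp (fun t ht => (hppos t ht).ne') s hs').mono
      (by rcases le_total c x with h|h
          · rw [Set.uIcc_of_le h]; exact fun a ha => ⟨le_trans hx₀c.le ha.1, lt_of_le_of_lt ha.2 hx.2⟩
          · rw [Set.uIcc_of_ge h]; exact fun a ha => ⟨le_trans hx.1 ha.1, lt_of_le_of_lt ha.2 hcb⟩)
  have hInonneg : ∀ x ∈ Set.Ioo c b, 0 ≤ I x := by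
    intro x hx
    apply intervalIntegral.integral_nonneg hx.1.le
    intro s hs
    have hsm : s ∈ Set.Ico x₀ b := ⟨le_trans hx₀c.le hs.1, lt_of_le_of_lt hs.2 hx.2⟩
    have := hppos s hsm
    positivity
  have hkey : ∀ x ∈ Set.Ioo c b, v c * I x ≤ u x := by
    intro x hx
    have hxIco : x ∈ Set.Ico x₀ b := ⟨le_trans hx₀c.le hx.1.le, hx.2⟩
    have hIccsub : Set.Icc c x ⊆ Set.Ico x₀ b := fun s hs =>
      ⟨le_trans hx₀c.le hs.1, lt_of_le_of_lt hs.2 hx.2⟩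
    have huint : IntervalIntegrable (deriv u) volume c x := by
      apply ContinuousOn.intervalIntegrable
      rw [Set.uIcc_of_le hx.1.le]
      exact hcderiv x hxIco
    have hftc : ∫ s in c..x, deriv u s = u x - u c := by
      apply intervalIntegral.integral_eq_sub_of_hasDerivAt
      · intro s hs
        rw [Set.uIcc_of_le hx.1.le] at hs
        exact (hu s (hIccsub hs)).hasDerivAt
      · exact huint
    have hmono : ∫ s in c..x, v c * (1 / p s) ≤ ∫ s in c..x, deriv u s := by
      apply intervalIntegral.integral_mono_on hx.1.le
      · exact (hIint x hxIco).const_mul _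
      · exact huint
      · intro s hs
        have hs' := hIccsub hs
        have hps := hppos s hs'
        have hvs : v c ≤ v s := by
          rcases eq_or_lt_of_le hs.1 with h | h
          · rw [← h]
          · exact le_of_lt (hvmono x hxIco
              (Set.mem_Icc.2 ⟨hx₀c.le, hx.1.le⟩)
              (Set.mem_Icc.2 ⟨le_trans hx₀c.le hs.1, hs.2⟩) h)
        have : deriv u s = v s / p s := by
          rw [hvdef]; field_simp
        rw [this]
        rw [mul_one_div]
        gcongr
    rw [intervalIntegral.integral_const_mul] at hmono
    have huc := hu1 c hcIco
    rw [hftc] at hmono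
    have : v c * I x ≤ u x - u c := hmono
    linarith
  -- measurability of I^2
  have hImono : MonotoneOn I (Set.Ioo c b) := by
    intro y hy z hz hyz
    have hyIco : y ∈ Set.Ico x₀ b := ⟨le_trans hx₀c.le hy.1.le, hy.2⟩
    have : I z - I y = ∫ s in y..z, 1 / p s := by
      rw [hIdef]
      simp only
      rw [← intervalIntegral.integral_add_adjacent_intervals (hIint y hyIco)
        (by
          apply ContinuousOn.intervalIntegrable
          rw [Set.uIcc_of_le hyz]
          exact (continuousOn_const.div hp (fun t ht => (hppos t ht).ne')).mono
            (fun a ha => ⟨le_trans hyIco.1 ha.1, lt_of_le_of_lt ha.2 hz.2⟩))]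
      ring
    have hnn : 0 ≤ ∫ s in y..z, 1 / p s := by
      apply intervalIntegral.integral_nonneg hyz
      intro s hs
      have hsm : s ∈ Set.Ico x₀ b := ⟨le_trans hyIco.1 hs.1, lt_of_le_of_lt hs.2 hz.2⟩
      have := hppos s hsm
      positivity
    linarith
  have hImeas : AEStronglyMeasurable (fun x => I x ^ 2) (volume.restrict (Set.Ioo c b)) := by
    have h1 : AEMeasurable I (volume.restrict (Set.Ioo c b)) :=
      aemeasurable_restrict_of_monotoneOn measurableSet_Ioo hImono
    exact ((continuous_pow 2).measurable.comp_aemeasurable h1).aestronglyMeasurable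
  -- conclude by comparison
  have hbound : IntegrableOn (fun x => ((v c)⁻¹) ^ 2 * u x ^ 2) (Set.Ioo c b) :=
    hint.const_mul _
  apply Integrable.mono' hbound hImeas
  rw [ae_restrict_iff' measurableSet_Ioo]
  filter_upwards with x
  intro hx
  have h1 := hkey x hx
  have h2 := hInonneg x hx
  have h3 : 0 ≤ v c * I x := mul_nonneg hvc.le h2
  have h4 : (v c * I x) ^ 2 ≤ u x ^ 2 := by nlinarith
  have h5 : I x ^ 2 = (v c)⁻¹ ^ 2 * (v c * I x) ^ 2 := by
    have hne : v c ≠ 0 := hvc.ne'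
    field_simp
  rw [Real.norm_eq_abs, abs_of_nonneg (sq_nonneg _), h5]
  nlinarith [sq_nonneg (v c * I x), sq_nonneg ((v c)⁻¹)]
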